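/- Let ξ > 0 and let F̄ : [0,∞) → (0,∞) be a nonincreasing function satisfying F̄(ux)/F̄(u) → x^{−1/ξ−1} as u → ∞, for every real x ≥ 1 (i.e., F̄ is regularly varying with index −1/ξ−1). Let p : ℕ → (0,∞) be a probability mass function (∑_{k=0}^{∞} p(k) = 1) for which there exist c > 0 and d ∈ ℕ with p(k) = c·F̄(k) for all integers k ≥ d. Then for every real x ≥ 1, (∑_{i=⌈ux⌉}^{∞} p(i)) / (∑_{i=u}^{∞} p(i)) → x^{−1/ξ} as u → ∞ along the positive integers; that is, the tail u ↦ ∑_{i≥u} p(i) is regularly varying with index −1/ξ. -/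

import Mathlib

open Filter Topology

open Filter Topology

lemma psi_tendsto (α : ℝ) (hα : 1 < α) :
    Tendsto (fun l : ℝ => (l - 1) / (1 - l ^ (1 - α))) (𝓝[>] (1:ℝ)) (𝓝 (α - 1)⁻¹) := by
  have hd : HasDerivAt (fun x : ℝ => x ^ (1 - α)) ((1 - α) * (1:ℝ) ^ (1 - α - 1)) 1 :=
    Real.hasDerivAt_rpow_const (Or.inl one_ne_zero)
  rw [Real.one_rpow, mul_one] at hd
  have hs : Tendsto (slope (fun x : ℝ => x ^ (1 - α)) 1) (𝓝[≠] (1:ℝ)) (𝓝 (1 - α)) :=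
    hasDerivAt_iff_tendsto_slope.mp hd
  have hs' : Tendsto (slope (fun x : ℝ => x ^ (1 - α)) 1) (𝓝[>] (1:ℝ)) (𝓝 (1 - α)) :=
    hs.mono_left (nhdsWithin_mono _ (fun x hx => ne_of_gt hx))
  have hne : (1 - α) ≠ 0 := by linarith
  have h2 : Tendsto (fun l : ℝ => -(slope (fun x : ℝ => x ^ (1 - α)) 1 l)⁻¹)
      (𝓝[>] (1:ℝ)) (𝓝 (-(1 - α)⁻¹)) := (hs'.inv₀ hne).neg
  have heq : ∀ l : ℝ, (l - 1) / (1 - l ^ (1 - α))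
      = -(slope (fun x : ℝ => x ^ (1 - α)) 1 l)⁻¹ := by
    intro l
    rw [slope_def_field, Real.one_rpow, inv_div, ← div_neg, neg_sub]
  have h3 := h2.congr (fun l => (heq l).symm)
  have : -(1 - α)⁻¹ = (α - 1)⁻¹ := by rw [neg_inv, neg_sub]
  rwa [this] at h3

section helpers

variable {F : ℝ → ℝ}

lemma Gsplit (hsum : Summable fun k : ℕ => F (k : ℝ)) {m m' : ℕ} (h : m ≤ m') :
    (∑' i : ℕ, F ((m + i : ℕ) : ℝ))
      = (∑ k ∈ Finset.Ico m m', F (k : ℝ)) + ∑' i : ℕ, F ((m' + i : ℕ) : ℝ) := by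
  have hf : Summable (fun i : ℕ => F ((m + i : ℕ) : ℝ)) :=
    ((summable_nat_add_iff (f := fun k : ℕ => F (k : ℝ)) m).mpr hsum).congr
      (fun i => by rw [add_comm])
  have key := Summable.sum_add_tsum_nat_add (f := fun i : ℕ => F ((m + i : ℕ) : ℝ)) (m' - m) hf
  rw [Finset.sum_Ico_eq_sum_range]
  have h1 : (∑ k ∈ Finset.range (m' - m), F ((m + k : ℕ) : ℝ))
      = ∑ i ∈ Finset.range (m' - m), (fun i : ℕ => F ((m + i : ℕ) : ℝ)) i := rfl
  have h2 : (∑' i : ℕ, F ((m' + i : ℕ) : ℝ))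
      = ∑' i : ℕ, (fun i : ℕ => F ((m + i : ℕ) : ℝ)) (i + (m' - m)) := by
    refine tsum_congr fun i => ?_
    have : m + (i + (m' - m)) = m' + i := by omega
    simp only [this]
  rw [h1, h2, key]

lemma block_upper (hFpos : ∀ x ≥ (0:ℝ), 0 < F x) (hFanti : AntitoneOn F (Set.Ici 0))
    {a b : ℝ} (ha : 0 ≤ a) (hab : a ≤ b) :
    ∑ k ∈ Finset.Ico ⌈a⌉₊ ⌈b⌉₊, F (k : ℝ) ≤ (b - a + 1) * F a := by
  have hle : ∀ k ∈ Finset.Ico ⌈a⌉₊ ⌈b⌉₊, F (k : ℝ) ≤ F a := by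
    intro k hk
    have hk1 : ⌈a⌉₊ ≤ k := (Finset.mem_Ico.mp hk).1
    have hak : a ≤ (k : ℝ) := le_trans (Nat.le_ceil a) (by exact_mod_cast hk1)
    exact hFanti ha (le_trans ha hak) hak
  have hcard := Finset.sum_le_card_nsmul _ _ _ hle
  rw [Nat.card_Ico] at hcard
  have hFa : 0 ≤ F a := (hFpos a ha).le
  have hcnt : ((⌈b⌉₊ - ⌈a⌉₊ : ℕ) : ℝ) ≤ b - a + 1 := by
    rw [Nat.cast_sub (Nat.ceil_le_ceil hab)]
    have := Nat.ceil_lt_add_one (le_trans ha hab)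
    have := Nat.le_ceil a
    linarith
  calc ∑ k ∈ Finset.Ico ⌈a⌉₊ ⌈b⌉₊, F (k : ℝ) ≤ ((⌈b⌉₊ - ⌈a⌉₊ : ℕ) : ℝ) * F a := by
        rw [nsmul_eq_mul] at hcard; exact hcard
    _ ≤ (b - a + 1) * F a := mul_le_mul_of_nonneg_right hcnt hFa

lemma block_lower (hFpos : ∀ x ≥ (0:ℝ), 0 < F x) (hFanti : AntitoneOn F (Set.Ici 0))
    {a b : ℝ} (ha : 0 ≤ a) (hab : a ≤ b) :
    (b - a - 1) * F b ≤ ∑ k ∈ Finset.Ico ⌈a⌉₊ ⌈b⌉₊, F (k : ℝ) := by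
  have hb : (0:ℝ) ≤ b := le_trans ha hab
  have hle : ∀ k ∈ Finset.Ico ⌈a⌉₊ ⌈b⌉₊, F b ≤ F (k : ℝ) := by
    intro k hk
    have hk2 : k < ⌈b⌉₊ := (Finset.mem_Ico.mp hk).2
    have hkb : (k : ℝ) ≤ b := by
      have h1 : (k : ℝ) ≤ (⌈b⌉₊ : ℝ) - 1 := by
        have : (k : ℝ) + 1 ≤ (⌈b⌉₊ : ℝ) := by exact_mod_cast hk2
        linarith
      have h2 : (⌈b⌉₊ : ℝ) < b + 1 := Nat.ceil_lt_add_one hb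
      linarith
    exact hFanti (Set.mem_Ici.mpr (Nat.cast_nonneg k)) hb hkb
  have hcard := Finset.card_nsmul_le_sum _ _ _ hle
  rw [Nat.card_Ico, nsmul_eq_mul] at hcard
  have hFb : 0 ≤ F b := (hFpos b hb).le
  have hcnt : b - a - 1 ≤ ((⌈b⌉₊ - ⌈a⌉₊ : ℕ) : ℝ) := by
    rw [Nat.cast_sub (Nat.ceil_le_ceil hab)]
    have := Nat.ceil_lt_add_one ha
    have := Nat.le_ceil b
    linarith
  exact le_trans (mul_le_mul_of_nonneg_right hcnt hFb) hcard

lemma iterate_bound {l ρ U : ℝ} (hl : 1 ≤ l) (hρ : 0 ≤ ρ) (hU : 0 ≤ U)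
    (h1 : ∀ v : ℝ, U ≤ v → F (v * l) ≤ ρ * F v) :
    ∀ v : ℝ, U ≤ v → ∀ n : ℕ, F (v * l ^ n) ≤ ρ ^ n * F v := by
  intro v hv n
  induction n with
  | zero => simp
  | succ n ih =>
    have hvn : U ≤ v * l ^ n := le_trans hv (le_mul_of_one_le_right (le_trans hU hv) (one_le_pow₀ hl))
    calc F (v * l ^ (n + 1)) = F ((v * l ^ n) * l) := by ring_nf
      _ ≤ ρ * F (v * l ^ n) := h1 _ hvn
      _ ≤ ρ * (ρ ^ n * F v) := mul_le_mul_of_nonneg_left ih hρ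
      _ = ρ ^ (n + 1) * F v := by ring

lemma Gtendsto : Filter.Tendsto (fun m : ℕ => ∑' i : ℕ, F ((m + i : ℕ) : ℝ))
    Filter.atTop (𝓝 0) := by
  have h := tendsto_sum_nat_add (f := fun k : ℕ => F (k : ℝ))
  exact h.congr fun m => tsum_congr fun i => by rw [add_comm]

end helpers

open Filter in
lemma upper_bound {F : ℝ → ℝ} (hFpos : ∀ x ≥ (0:ℝ), 0 < F x)
    (hFanti : AntitoneOn F (Set.Ici 0)) (hsum : Summable fun k : ℕ => F (k : ℝ))
    {l ρ U : ℝ} (hl : 1 < l) (hρ0 : 0 ≤ ρ) (hlρ : l * ρ < 1) (hU : 1 ≤ U)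
    (h1 : ∀ v : ℝ, U ≤ v → F (v * l) ≤ ρ * F v) :
    ∀ m : ℕ, U ≤ (m : ℝ) →
      (∑' i : ℕ, F ((m + i : ℕ) : ℝ))
        ≤ (l - 1) / (1 - l * ρ) * ((m : ℝ) * F m) + (1 - ρ)⁻¹ * F m := by
  intro m hm
  set G : ℕ → ℝ := fun n => ∑' i : ℕ, F ((n + i : ℕ) : ℝ) with hG
  have hm0 : (0:ℝ) ≤ (m:ℝ) := le_trans (by linarith) hm
  have hFm : 0 ≤ F m := (hFpos _ hm0).le
  have hρ1 : ρ < 1 := by nlinarith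
  -- Step 1 : telescoping estimate
  have step1 : ∀ N : ℕ, G m ≤ (∑ n ∈ Finset.range N,
      ((m : ℝ) * (l - 1) * (l * ρ) ^ n + ρ ^ n) * F m) + G ⌈(m : ℝ) * l ^ N⌉₊ := by
    intro N
    induction N with
    | zero => simp [hG]
    | succ N ih =>
      have ha : (0:ℝ) ≤ (m : ℝ) * l ^ N := by positivity
      have hab : (m : ℝ) * l ^ N ≤ (m : ℝ) * l ^ (N + 1) := by
        apply mul_le_mul_of_nonneg_left _ hm0
        exact pow_le_pow_right₀ hl.le (Nat.le_succ N)
      have hceil : ⌈(m : ℝ) * l ^ N⌉₊ ≤ ⌈(m : ℝ) * l ^ (N + 1)⌉₊ := Nat.ceil_le_ceil hab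
      have hsplit := Gsplit hsum hceil
      have hblock := block_upper hFpos hFanti ha hab
      have hiter : F ((m : ℝ) * l ^ N) ≤ ρ ^ N * F m :=
        iterate_bound hl.le hρ0 (by linarith) h1 (m : ℝ) hm N
      have hcnt : (0:ℝ) ≤ (m : ℝ) * l ^ (N + 1) - (m : ℝ) * l ^ N + 1 := by nlinarith
      have hblock2 : (∑ k ∈ Finset.Ico ⌈(m : ℝ) * l ^ N⌉₊ ⌈(m : ℝ) * l ^ (N + 1)⌉₊, F (k : ℝ))
          ≤ ((m : ℝ) * (l - 1) * (l * ρ) ^ N + ρ ^ N) * F m := by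
        calc _ ≤ ((m : ℝ) * l ^ (N + 1) - (m : ℝ) * l ^ N + 1) * F ((m : ℝ) * l ^ N) := hblock
          _ ≤ ((m : ℝ) * l ^ (N + 1) - (m : ℝ) * l ^ N + 1) * (ρ ^ N * F m) :=
              mul_le_mul_of_nonneg_left hiter hcnt
          _ = ((m : ℝ) * (l - 1) * (l * ρ) ^ N + ρ ^ N) * F m := by rw [mul_pow]; ring
      calc G m ≤ (∑ n ∈ Finset.range N,
            ((m : ℝ) * (l - 1) * (l * ρ) ^ n + ρ ^ n) * F m) + G ⌈(m : ℝ) * l ^ N⌉₊ := ih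
        _ ≤ (∑ n ∈ Finset.range N, ((m : ℝ) * (l - 1) * (l * ρ) ^ n + ρ ^ n) * F m)
            + (((m : ℝ) * (l - 1) * (l * ρ) ^ N + ρ ^ N) * F m + G ⌈(m : ℝ) * l ^ (N + 1)⌉₊) := by
            have hsp : G ⌈(m : ℝ) * l ^ N⌉₊
                = (∑ k ∈ Finset.Ico ⌈(m : ℝ) * l ^ N⌉₊ ⌈(m : ℝ) * l ^ (N + 1)⌉₊, F (k : ℝ))
                  + G ⌈(m : ℝ) * l ^ (N + 1)⌉₊ := hsplit
            linarith [hsp, hblock2]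
        _ = (∑ n ∈ Finset.range (N + 1),
            ((m : ℝ) * (l - 1) * (l * ρ) ^ n + ρ ^ n) * F m) + G ⌈(m : ℝ) * l ^ (N + 1)⌉₊ := by
            rw [Finset.sum_range_succ]; ring
  -- Step 2 : geometric sum bound
  have hgeom1 : ∀ N : ℕ, (∑ n ∈ Finset.range N, (l * ρ) ^ n) ≤ (1 - l * ρ)⁻¹ :=
    fun N => sum_le_hasSum _ (fun i _ => by positivity)
      (hasSum_geometric_of_lt_one (by positivity) hlρ)
  have hgeom2 : ∀ N : ℕ, (∑ n ∈ Finset.range N, ρ ^ n) ≤ (1 - ρ)⁻¹ :=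
    fun N => sum_le_hasSum _ (fun i _ => by positivity)
      (hasSum_geometric_of_lt_one hρ0 hρ1)
  have step2 : ∀ N : ℕ, (∑ n ∈ Finset.range N,
      ((m : ℝ) * (l - 1) * (l * ρ) ^ n + ρ ^ n) * F m)
        ≤ (l - 1) / (1 - l * ρ) * ((m : ℝ) * F m) + (1 - ρ)⁻¹ * F m := by
    intro N
    have : (∑ n ∈ Finset.range N, ((m : ℝ) * (l - 1) * (l * ρ) ^ n + ρ ^ n) * F m)
        = ((m : ℝ) * (l - 1) * (∑ n ∈ Finset.range N, (l * ρ) ^ n)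
          + (∑ n ∈ Finset.range N, ρ ^ n)) * F m := by
      rw [add_mul, Finset.mul_sum, Finset.sum_mul, Finset.sum_mul, ← Finset.sum_add_distrib]
      exact Finset.sum_congr rfl fun n _ => by ring
    rw [this]
    have h1' : (m : ℝ) * (l - 1) * (∑ n ∈ Finset.range N, (l * ρ) ^ n)
        + (∑ n ∈ Finset.range N, ρ ^ n)
        ≤ (m : ℝ) * (l - 1) * (1 - l * ρ)⁻¹ + (1 - ρ)⁻¹ := by
      have hml : 0 ≤ (m : ℝ) * (l - 1) := by nlinarith
      have := mul_le_mul_of_nonneg_left (hgeom1 N) hml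
      linarith [hgeom2 N]
    calc _ ≤ ((m : ℝ) * (l - 1) * (1 - l * ρ)⁻¹ + (1 - ρ)⁻¹) * F m :=
          mul_le_mul_of_nonneg_right h1' hFm
      _ = (l - 1) / (1 - l * ρ) * ((m : ℝ) * F m) + (1 - ρ)⁻¹ * F m := by ring
  -- Step 3 : take N → ∞
  have htail : Tendsto (fun N : ℕ => G ⌈(m : ℝ) * l ^ N⌉₊) atTop (𝓝 0) := by
    apply Gtendsto.comp
    apply tendsto_nat_ceil_atTop.comp
    exact Tendsto.const_mul_atTop (by linarith : (0:ℝ) < (m:ℝ))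
      (tendsto_pow_atTop_atTop_of_one_lt hl)
  have hev : ∀ᶠ N : ℕ in atTop,
      G m - ((l - 1) / (1 - l * ρ) * ((m : ℝ) * F m) + (1 - ρ)⁻¹ * F m)
        ≤ G ⌈(m : ℝ) * l ^ N⌉₊ := by
    filter_upwards with N
    have := step1 N
    have := step2 N
    linarith
  have := ge_of_tendsto htail hev
  linarith

lemma lower_bound {F : ℝ → ℝ} (hFpos : ∀ x ≥ (0:ℝ), 0 < F x)
    (hFanti : AntitoneOn F (Set.Ici 0)) (hsum : Summable fun k : ℕ => F (k : ℝ))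
    {l : ℝ} (hl : 1 < l) {N : ℕ} {c : ℕ → ℝ}
    (m : ℕ) (hm1 : 1 ≤ (m : ℝ) * (l - 1))
    (h1 : ∀ n < N, c n * F (m : ℝ) ≤ F ((m : ℝ) * l ^ (n + 1))) :
    (∑ n ∈ Finset.range N, ((m : ℝ) * l ^ n * (l - 1) - 1) * (c n * F (m : ℝ)))
      ≤ ∑' i : ℕ, F ((m + i : ℕ) : ℝ) := by
  set G : ℕ → ℝ := fun n => ∑' i : ℕ, F ((n + i : ℕ) : ℝ) with hG
  have hm0 : (0:ℝ) ≤ (m : ℝ) := Nat.cast_nonneg m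
  -- telescoping equality
  have tel : ∀ K : ℕ, G m = (∑ n ∈ Finset.range K,
      ∑ k ∈ Finset.Ico ⌈(m : ℝ) * l ^ n⌉₊ ⌈(m : ℝ) * l ^ (n + 1)⌉₊, F (k : ℝ))
      + G ⌈(m : ℝ) * l ^ K⌉₊ := by
    intro K
    induction K with
    | zero => simp [hG]
    | succ K ih =>
      have hab : (m : ℝ) * l ^ K ≤ (m : ℝ) * l ^ (K + 1) :=
        mul_le_mul_of_nonneg_left (pow_le_pow_right₀ hl.le (Nat.le_succ K)) hm0
      have hsp : G ⌈(m : ℝ) * l ^ K⌉₊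
          = (∑ k ∈ Finset.Ico ⌈(m : ℝ) * l ^ K⌉₊ ⌈(m : ℝ) * l ^ (K + 1)⌉₊, F (k : ℝ))
            + G ⌈(m : ℝ) * l ^ (K + 1)⌉₊ := Gsplit hsum (Nat.ceil_le_ceil hab)
      rw [ih, hsp, Finset.sum_range_succ]; ring
  -- blocks bounded below
  have hblocks : ∀ n < N, ((m : ℝ) * l ^ n * (l - 1) - 1) * (c n * F (m : ℝ))
      ≤ ∑ k ∈ Finset.Ico ⌈(m : ℝ) * l ^ n⌉₊ ⌈(m : ℝ) * l ^ (n + 1)⌉₊, F (k : ℝ) := by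
    intro n hn
    have ha : (0:ℝ) ≤ (m : ℝ) * l ^ n := by positivity
    have hab : (m : ℝ) * l ^ n ≤ (m : ℝ) * l ^ (n + 1) :=
      mul_le_mul_of_nonneg_left (pow_le_pow_right₀ hl.le (Nat.le_succ n)) hm0
    have hbl := block_lower hFpos hFanti ha hab
    have hfac : (0:ℝ) ≤ (m : ℝ) * l ^ n * (l - 1) - 1 := by
      have h1n : (1:ℝ) ≤ l ^ n := one_le_pow₀ hl.le
      nlinarith
    have heq : (m : ℝ) * l ^ (n + 1) - (m : ℝ) * l ^ n - 1
        = (m : ℝ) * l ^ n * (l - 1) - 1 := by ring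
    rw [heq] at hbl
    refine le_trans ?_ hbl
    exact mul_le_mul_of_nonneg_left (h1 n hn) hfac
  have hsumle : (∑ n ∈ Finset.range N, ((m : ℝ) * l ^ n * (l - 1) - 1) * (c n * F (m : ℝ)))
      ≤ ∑ n ∈ Finset.range N,
        ∑ k ∈ Finset.Ico ⌈(m : ℝ) * l ^ n⌉₊ ⌈(m : ℝ) * l ^ (n + 1)⌉₊, F (k : ℝ) :=
    Finset.sum_le_sum fun n hn => hblocks n (Finset.mem_range.mp hn)
  have hGnn : 0 ≤ G ⌈(m : ℝ) * l ^ N⌉₊ :=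
    tsum_nonneg fun i => (hFpos _ (Nat.cast_nonneg _)).le
  have := tel N
  linarith

open Filter in
lemma keyG (ξ : ℝ) (hξ : 0 < ξ) {F : ℝ → ℝ} (hFpos : ∀ x ≥ (0:ℝ), 0 < F x)
    (hFanti : AntitoneOn F (Set.Ici 0))
    (hRV : ∀ x ≥ (1:ℝ), Tendsto (fun u : ℝ => F (u * x) / F u) atTop (𝓝 (x ^ (-1/ξ - 1))))
    (hsum : Summable fun k : ℕ => F (k : ℝ)) :
    Tendsto (fun m : ℕ => (∑' i : ℕ, F ((m + i : ℕ) : ℝ)) / ((m : ℝ) * F m))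
      atTop (𝓝 ξ) := by
  set α : ℝ := 1/ξ + 1 with hαdef
  have hα : 1 < α := by rw [hαdef]; have := one_div_pos.mpr hξ; linarith
  have hRV' : ∀ x ≥ (1:ℝ), Tendsto (fun u : ℝ => F (u * x) / F u) atTop (𝓝 (x ^ (-α))) := by
    intro x hx
    have h := hRV x hx
    have : x ^ (-1/ξ - 1) = x ^ (-α) := by rw [hαdef]; ring_nf
    rwa [this] at h
  have hψ : Tendsto (fun l : ℝ => (l - 1) / (1 - l ^ (1 - α))) (𝓝[>] (1:ℝ)) (𝓝 ξ) := by
    have h := psi_tendsto α hα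
    have h2 : (α - 1)⁻¹ = ξ := by rw [hαdef]; field_simp; ring
    rwa [h2] at h
  rw [tendsto_order]
  constructor
  · -- lower bound side
    intro a ha
    set a₁ : ℝ := (a + ξ) / 2 with ha₁def
    have ha₁ξ : a₁ < ξ := by rw [ha₁def]; linarith
    have haa₁ : a < a₁ := by rw [ha₁def]; linarith
    have hc1 : Tendsto (fun l : ℝ => l ^ (-α)) (𝓝[>] (1:ℝ)) (𝓝 1) := by
      have hca : ContinuousAt (fun l : ℝ => l ^ (-α)) 1 :=
        Real.continuousAt_rpow_const 1 (-α) (Or.inl one_ne_zero)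
      have := hca.tendsto
      rw [Real.one_rpow] at this
      exact this.mono_left nhdsWithin_le_nhds
    have hφ : Tendsto (fun l : ℝ => l ^ (-α) * ((l - 1) / (1 - l ^ (1 - α))))
        (𝓝[>] (1:ℝ)) (𝓝 ξ) := by
      have := hc1.mul hψ
      rwa [one_mul] at this
    obtain ⟨l, hφl, hl⟩ := ((hφ.eventually_const_lt ha₁ξ).and eventually_mem_nhdsWithin).exists
    rw [Set.mem_Ioi] at hl
    have hl0 : (0:ℝ) < l := by linarith
    set q : ℝ := l ^ (1 - α) with hqdef
    have hq0 : 0 < q := Real.rpow_pos_of_pos hl0 _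
    have hq1 : q < 1 := Real.rpow_lt_one_of_one_lt_of_neg hl (by linarith)
    -- partial sums of the ideal geometric series
    have hS : HasSum (fun n : ℕ => (l - 1) * l ^ (-α) * q ^ n)
        ((l - 1) * l ^ (-α) * (1 - q)⁻¹) :=
      (hasSum_geometric_of_lt_one hq0.le hq1).mul_left _
    have hSval : a₁ < (l - 1) * l ^ (-α) * (1 - q)⁻¹ := by
      have : (l - 1) * l ^ (-α) * (1 - q)⁻¹ = l ^ (-α) * ((l - 1) / (1 - q)) := by ring
      rw [this]; exact hφl
    obtain ⟨N, hN⟩ := ((hS.tendsto_sum_nat).eventually_const_lt hSval).exists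
    set SN : ℝ := ∑ n ∈ Finset.range N, (l - 1) * l ^ (-α) * q ^ n with hSNdef
    set A : ℝ := ∑ n ∈ Finset.range N, l ^ n * (l - 1) with hAdef
    have hA0 : 0 ≤ A := Finset.sum_nonneg fun n _ => mul_nonneg (by positivity) (by linarith)
    set ε₀ : ℝ := (SN - a₁) / (A + 1) with hε₀def
    have hε₀ : 0 < ε₀ := div_pos (by linarith) (by linarith)
    set cf : ℕ → ℝ := fun n => (l ^ (n + 1) : ℝ) ^ (-α) - ε₀ with hcdef
    have idn : ∀ n : ℕ, (l ^ n : ℝ) * (l ^ (n + 1) : ℝ) ^ (-α) = l ^ (-α) * q ^ n := by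
      intro n
      rw [hqdef, ← Real.rpow_natCast l n, ← Real.rpow_natCast l (n + 1),
        ← Real.rpow_mul hl0.le, ← Real.rpow_natCast (l ^ (1 - α)) n,
        ← Real.rpow_mul hl0.le, ← Real.rpow_add hl0, ← Real.rpow_add hl0]
      congr 1
      push_cast
      ring
    -- eventual hypotheses in m
    have hev_n : ∀ n ∈ Finset.range N, ∀ᶠ m : ℕ in atTop,
        cf n * F (m : ℝ) ≤ F ((m : ℝ) * l ^ (n + 1)) := by
      intro n _
      have hx1 : (1:ℝ) ≤ l ^ (n + 1) := one_le_pow₀ hl.le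
      have h := hRV' (l ^ (n + 1)) hx1
      have hlt : (l ^ (n + 1) : ℝ) ^ (-α) - ε₀ < (l ^ (n + 1) : ℝ) ^ (-α) := by linarith
      have h2 := (h.comp tendsto_natCast_atTop_atTop).eventually_const_lt hlt
      filter_upwards [h2] with m hm
      have hFm : 0 < F (m : ℝ) := hFpos _ (Nat.cast_nonneg m)
      rw [Function.comp_def, lt_div_iff₀ hFm] at hm
      rw [hcdef]
      exact hm.le
    have hevall := (Filter.eventually_all_finset (Finset.range N)).mpr hev_n
    have hev_m1 : ∀ᶠ m : ℕ in atTop, 1 ≤ (m : ℝ) * (l - 1) := by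
      filter_upwards [tendsto_natCast_atTop_atTop.eventually_ge_atTop ((l-1)⁻¹)] with m hm
      have h2 : (l - 1)⁻¹ * (l - 1) ≤ (m : ℝ) * (l - 1) :=
        mul_le_mul_of_nonneg_right hm (by linarith)
      rwa [inv_mul_cancel₀ (by linarith : l - 1 ≠ 0)] at h2
    set Csum : ℝ := ∑ n ∈ Finset.range N, cf n with hCdef
    have hev_small : ∀ᶠ m : ℕ in atTop, (m : ℝ)⁻¹ * |Csum| < a₁ - a := by
      have h0 : Tendsto (fun m : ℕ => (m : ℝ)⁻¹ * |Csum|) atTop (𝓝 0) := by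
        have := (tendsto_inv_atTop_nhds_zero_nat (𝕜 := ℝ)).mul_const |Csum|
        rwa [zero_mul] at this
      exact h0.eventually_lt_const (by linarith)
    filter_upwards [hevall, hev_m1, hev_small] with m hall hm1 hsmall
    have hm0 : (0:ℝ) < (m : ℝ) := by nlinarith [hm1, hl]
    have hFm : 0 < F (m : ℝ) := hFpos _ hm0.le
    have hmF : 0 < (m : ℝ) * F m := mul_pos hm0 hFm
    have hLB := lower_bound hFpos hFanti hsum hl m hm1
      (fun n hn => hall n (Finset.mem_range.mpr hn))
    -- algebra on the lower bound
    have hE : (∑ n ∈ Finset.range N, ((m : ℝ) * l ^ n * (l - 1) - 1) * (cf n * F (m : ℝ)))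
        = ((∑ n ∈ Finset.range N, (l ^ n * (l - 1)) * cf n) - (m : ℝ)⁻¹ * Csum)
          * ((m : ℝ) * F m) := by
      rw [hCdef, sub_mul, Finset.sum_mul, Finset.mul_sum, Finset.sum_mul,
        ← Finset.sum_sub_distrib]
      refine Finset.sum_congr rfl fun n _ => ?_
      field_simp
    have hsum1 : (∑ n ∈ Finset.range N, (l ^ n * (l - 1)) * cf n) = SN - ε₀ * A := by
      have hterm : ∀ n : ℕ, (l ^ n * (l - 1)) * cf n
          = (l - 1) * l ^ (-α) * q ^ n - ε₀ * (l ^ n * (l - 1)) := by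
        intro n
        have hc : cf n = (l ^ (n + 1) : ℝ) ^ (-α) - ε₀ := rfl
        rw [hc]
        linear_combination (l - 1) * idn n
      rw [Finset.sum_congr rfl fun n _ => hterm n, Finset.sum_sub_distrib, hSNdef, hAdef]
      congr 1
      exact (Finset.mul_sum _ _ _).symm
    have hεA : ε₀ * A ≤ SN - a₁ := by
      have h1 : ε₀ * (A + 1) = SN - a₁ := by
        rw [hε₀def, div_mul_cancel₀]; linarith
      nlinarith
    have hCs : (m : ℝ)⁻¹ * Csum ≤ (m : ℝ)⁻¹ * |Csum| :=
      mul_le_mul_of_nonneg_left (le_abs_self _) (by positivity)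
    have hinner : a < (∑ n ∈ Finset.range N, (l ^ n * (l - 1)) * cf n) - (m : ℝ)⁻¹ * Csum := by
      rw [hsum1]
      linarith
    rw [lt_div_iff₀ hmF]
    calc a * ((m : ℝ) * F m)
        < ((∑ n ∈ Finset.range N, (l ^ n * (l - 1)) * cf n) - (m : ℝ)⁻¹ * Csum)
          * ((m : ℝ) * F m) := by
          exact mul_lt_mul_of_pos_right hinner hmF
      _ = ∑ n ∈ Finset.range N, ((m : ℝ) * l ^ n * (l - 1) - 1) * (cf n * F (m : ℝ)) := hE.symm
      _ ≤ _ := hLB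
  · -- upper bound side
    intro b hb
    set b' : ℝ := (ξ + b) / 2 with hb'def
    have hb'1 : ξ < b' := by rw [hb'def]; linarith
    have hb'2 : b' < b := by rw [hb'def]; linarith
    obtain ⟨l, hψl, hl⟩ := ((hψ.eventually_lt_const hb'1).and eventually_mem_nhdsWithin).exists
    rw [Set.mem_Ioi] at hl
    have hl0 : (0:ℝ) < l := by linarith
    set ρ₀ : ℝ := l ^ (-α) with hρ₀def
    have hρ₀pos : 0 < ρ₀ := Real.rpow_pos_of_pos hl0 _
    have hq : l ^ (1 - α) = l * l ^ (-α) := by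
      rw [sub_eq_add_neg, Real.rpow_add hl0, Real.rpow_one]
    have hlρ₀ : l * ρ₀ < 1 := by
      rw [hρ₀def, ← hq]
      exact Real.rpow_lt_one_of_one_lt_of_neg hl (by linarith)
    have hden : (1 - l * ρ₀) ≠ 0 := by nlinarith [hlρ₀]
    have hgcont : Tendsto (fun ρ : ℝ => (l - 1) / (1 - l * ρ)) (𝓝 ρ₀)
        (𝓝 ((l - 1) / (1 - l * ρ₀))) :=
      ContinuousAt.div continuousAt_const
        ((continuous_const.sub (continuous_const.mul continuous_id)).continuousAt) hden
    have hgval : (l - 1) / (1 - l * ρ₀) < b' := by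
      rw [hρ₀def, ← hq]; exact hψl
    have hev2 : ∀ᶠ ρ in 𝓝[>] ρ₀, (l - 1) / (1 - l * ρ) < b' :=
      (hgcont.eventually_lt_const hgval).filter_mono nhdsWithin_le_nhds
    have hev3 : ∀ᶠ ρ in 𝓝[>] ρ₀, l * ρ < 1 := by
      have : Tendsto (fun ρ : ℝ => l * ρ) (𝓝 ρ₀) (𝓝 (l * ρ₀)) :=
        (continuous_const.mul continuous_id).tendsto ρ₀
      exact (this.eventually_lt_const hlρ₀).filter_mono nhdsWithin_le_nhds
    obtain ⟨ρ, hgρ, hlρ, hρgt⟩ := (hev2.and (hev3.and eventually_mem_nhdsWithin)).exists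
    rw [Set.mem_Ioi] at hρgt
    have hρ0 : 0 ≤ ρ := (hρ₀pos.trans hρgt).le
    -- one-step bound
    have hup := (hRV' l hl.le).eventually_lt_const hρgt
    obtain ⟨U₀, hU₀⟩ := eventually_atTop.mp hup
    set U : ℝ := max U₀ 1 with hUdef
    have hU1 : (1:ℝ) ≤ U := le_max_right _ _
    have h1 : ∀ v : ℝ, U ≤ v → F (v * l) ≤ ρ * F v := by
      intro v hv
      have hv1 : (1:ℝ) ≤ v := le_trans hU1 hv
      have hFv : 0 < F v := hFpos v (by linarith)
      have := hU₀ v (le_trans (le_max_left _ _) hv)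
      rw [div_lt_iff₀ hFv] at this
      linarith
    have hUB := upper_bound hFpos hFanti hsum hl hρ0 hlρ hU1 h1
    have hρ1 : ρ < 1 := by nlinarith
    have hev5 : ∀ᶠ m : ℕ in atTop, (1 - ρ)⁻¹ * (m : ℝ)⁻¹ < b - b' := by
      have h0 : Tendsto (fun m : ℕ => (1 - ρ)⁻¹ * (m : ℝ)⁻¹) atTop (𝓝 0) := by
        have := (tendsto_inv_atTop_nhds_zero_nat (𝕜 := ℝ)).const_mul (1 - ρ)⁻¹
        rwa [mul_zero] at this
      exact h0.eventually_lt_const (by linarith)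
    filter_upwards [tendsto_natCast_atTop_atTop.eventually_ge_atTop U, hev5] with m h4 h5
    have hm1 : (1:ℝ) ≤ (m : ℝ) := le_trans hU1 h4
    have hFm : 0 < F (m : ℝ) := hFpos _ (by linarith)
    have hmF : 0 < (m : ℝ) * F m := mul_pos (by linarith) hFm
    have hb1 := hUB m h4
    have hmne : (m : ℝ) ≠ 0 := by linarith
    have e1 : (1 - ρ)⁻¹ * F (m : ℝ) = ((1 - ρ)⁻¹ * (m : ℝ)⁻¹) * ((m : ℝ) * F m) := by
      calc (1 - ρ)⁻¹ * F (m : ℝ) = (1 - ρ)⁻¹ * F (m : ℝ) * ((m : ℝ)⁻¹ * m) := by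
            rw [inv_mul_cancel₀ hmne, mul_one]
        _ = ((1 - ρ)⁻¹ * (m : ℝ)⁻¹) * ((m : ℝ) * F m) := by ring
    have e2 : (l - 1) / (1 - l * ρ) * ((m : ℝ) * F m) < b' * ((m : ℝ) * F m) :=
      mul_lt_mul_of_pos_right hgρ hmF
    have e3 : ((1 - ρ)⁻¹ * (m : ℝ)⁻¹) * ((m : ℝ) * F m) < (b - b') * ((m : ℝ) * F m) :=
      mul_lt_mul_of_pos_right h5 hmF
    rw [div_lt_iff₀ hmF]
    linarith [hb1, e1, e2, e3]

open Filter in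
lemma Fratio {F : ℝ → ℝ} (hFpos : ∀ x ≥ (0:ℝ), 0 < F x)
    (hFanti : AntitoneOn F (Set.Ici 0)) {β : ℝ}
    (hRV : ∀ x ≥ (1:ℝ), Tendsto (fun u : ℝ => F (u * x) / F u) atTop (𝓝 (x ^ β)))
    {x : ℝ} (hx : 1 ≤ x) :
    Tendsto (fun u : ℕ => F ((⌈(u : ℝ) * x⌉₊ : ℕ) : ℝ) / F u) atTop (𝓝 (x ^ β)) := by
  have hx0 : (0:ℝ) < x := by linarith
  rw [tendsto_order]
  constructor
  · intro a ha
    have hcont : Tendsto (fun t : ℝ => t ^ β) (𝓝[>] x) (𝓝 (x ^ β)) :=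
      ((Real.continuousAt_rpow_const x β (Or.inl (ne_of_gt hx0))).tendsto).mono_left
        nhdsWithin_le_nhds
    obtain ⟨x', hax', hxx'⟩ := ((hcont.eventually_const_lt ha).and eventually_mem_nhdsWithin).exists
    rw [Set.mem_Ioi] at hxx'
    have hx'1 : (1:ℝ) ≤ x' := by linarith
    have h1 := ((hRV x' hx'1).comp tendsto_natCast_atTop_atTop).eventually_const_lt hax'
    have h2 := tendsto_natCast_atTop_atTop.eventually_ge_atTop ((x' - x)⁻¹)
    filter_upwards [h1, h2] with u hu1 hu2
    have hu0 : (0:ℝ) ≤ (u : ℝ) := Nat.cast_nonneg u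
    have hFu : 0 < F (u : ℝ) := hFpos _ hu0
    have hux1 : (u : ℝ) * (x' - x) ≥ 1 := by
      have := mul_le_mul_of_nonneg_right hu2 (le_of_lt (by linarith : (0:ℝ) < x' - x))
      rwa [inv_mul_cancel₀ (by linarith : x' - x ≠ 0)] at this
    have hMle : ((⌈(u : ℝ) * x⌉₊ : ℕ) : ℝ) ≤ (u : ℝ) * x' := by
      have := Nat.ceil_lt_add_one (by positivity : (0:ℝ) ≤ (u : ℝ) * x)
      nlinarith
    have hFM : F ((u : ℝ) * x') ≤ F ((⌈(u : ℝ) * x⌉₊ : ℕ) : ℝ) :=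
      hFanti (Set.mem_Ici.mpr (Nat.cast_nonneg _)) (Set.mem_Ici.mpr (by positivity)) hMle
    rw [Function.comp_def] at hu1
    calc a < F ((u : ℝ) * x') / F (u : ℝ) := hu1
      _ ≤ F ((⌈(u : ℝ) * x⌉₊ : ℕ) : ℝ) / F (u : ℝ) := by gcongr
  · intro b hb
    have h1 := ((hRV x hx).comp tendsto_natCast_atTop_atTop).eventually_lt_const hb
    filter_upwards [h1] with u hu1
    have hu0 : (0:ℝ) ≤ (u : ℝ) := Nat.cast_nonneg u
    have hFu : 0 < F (u : ℝ) := hFpos _ hu0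
    have hFM : F ((⌈(u : ℝ) * x⌉₊ : ℕ) : ℝ) ≤ F ((u : ℝ) * x) :=
      hFanti (Set.mem_Ici.mpr (by positivity)) (Set.mem_Ici.mpr (Nat.cast_nonneg _)) (Nat.le_ceil _)
    rw [Function.comp_def] at hu1
    calc F ((⌈(u : ℝ) * x⌉₊ : ℕ) : ℝ) / F (u : ℝ) ≤ F ((u : ℝ) * x) / F (u : ℝ) := by gcongr
      _ < b := hu1




/-- If `F̄` is positive, nonincreasing on `[0,∞)` and regularly varying
with index `-1/ξ - 1` (`ξ > 0`), and `p` is a probability mass function on `ℕ` with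
`p(k) = c·F̄(k)` for all `k ≥ d`, then the tail `u ↦ ∑_{i ≥ u} p(i)` is regularly
varying with index `-1/ξ`: for every `x ≥ 1`,
`(∑_{i = ⌈ux⌉}^∞ p(i)) / (∑_{i = u}^∞ p(i)) → x^(-1/ξ)` as `u → ∞` over the integers. -/
theorem pmf_tail_regularly_varying (ξ : ℝ) (hξ : 0 < ξ) (F : ℝ → ℝ)
    (hFpos : ∀ x ≥ (0:ℝ), 0 < F x)
    (hFanti : AntitoneOn F (Set.Ici 0))
    (hRV : ∀ x ≥ (1:ℝ), Filter.Tendsto (fun u : ℝ => F (u * x) / F u)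
      Filter.atTop (nhds (x ^ (-1/ξ - 1))))
    (p : ℕ → ℝ) (hppos : ∀ k, 0 < p k) (hpsum : ∑' k : ℕ, p k = 1)
    (c : ℝ) (hc : 0 < c) (d : ℕ) (hpF : ∀ k ≥ d, p k = c * F k) :
    ∀ x ≥ (1:ℝ), Filter.Tendsto
      (fun u : ℕ => (∑' i : ℕ, p (⌈(u : ℝ) * x⌉₊ + i)) / (∑' i : ℕ, p (u + i)))
      Filter.atTop (nhds (x ^ (-1/ξ))) := by
  intro x hx
  have hx0 : (0:ℝ) < x := by linarith
  have hξne : ξ ≠ 0 := ne_of_gt hξ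
  -- summability
  have hpsummable : Summable p := by
    by_contra h
    rw [tsum_eq_zero_of_not_summable h] at hpsum
    norm_num at hpsum
  have hsum : Summable (fun k : ℕ => F (k : ℝ)) := by
    have h1 : Summable (fun k : ℕ => p (k + d)) := (summable_nat_add_iff d).mpr hpsummable
    have h2 : Summable (fun k : ℕ => c * F ((k + d : ℕ) : ℝ)) :=
      h1.congr fun k => hpF (k + d) (Nat.le_add_left d k)
    have h3 : Summable (fun k : ℕ => F ((k + d : ℕ) : ℝ)) :=
      (h2.mul_left c⁻¹).congr fun k => inv_mul_cancel_left₀ (ne_of_gt hc) _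
    exact (summable_nat_add_iff d).mp h3
  have hkey := keyG ξ hξ hFpos hFanti hRV hsum
  set G : ℕ → ℝ := fun m => ∑' i : ℕ, F ((m + i : ℕ) : ℝ) with hGdef
  have hGpos : ∀ m : ℕ, 0 < G m := by
    intro m
    have hsm : Summable (fun i : ℕ => F ((m + i : ℕ) : ℝ)) :=
      ((summable_nat_add_iff (f := fun k : ℕ => F (k : ℝ)) m).mpr hsum).congr
        fun i => by rw [add_comm]
    have h0 : F ((m + 0 : ℕ) : ℝ) ≤ G m :=
      Summable.le_tsum hsm 0 fun i _ => (hFpos _ (Nat.cast_nonneg _)).le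
    have := hFpos ((m + 0 : ℕ) : ℝ) (Nat.cast_nonneg _)
    linarith
  have hMle : ∀ u : ℕ, u ≤ ⌈(u : ℝ) * x⌉₊ := by
    intro u
    have h : ((u : ℕ) : ℝ) ≤ (u : ℝ) * x := le_mul_of_one_le_right (Nat.cast_nonneg u) hx
    calc u = ⌈((u : ℕ) : ℝ)⌉₊ := (Nat.ceil_natCast u).symm
      _ ≤ _ := Nat.ceil_le_ceil h
  have hMtop : Tendsto (fun u : ℕ => ⌈(u : ℝ) * x⌉₊) atTop atTop :=
    tendsto_atTop_mono hMle tendsto_id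
  -- the four factors
  have hA : Tendsto (fun u : ℕ => G ⌈(u : ℝ) * x⌉₊
      / ((⌈(u : ℝ) * x⌉₊ : ℝ) * F ((⌈(u : ℝ) * x⌉₊ : ℕ) : ℝ))) atTop (𝓝 ξ) :=
    hkey.comp hMtop
  have hD : Tendsto (fun u : ℕ => ((u : ℝ) * F u) / G u) atTop (𝓝 ξ⁻¹) := by
    have h := hkey.inv₀ hξne
    exact h.congr fun u => by rw [inv_div]
  have hB : Tendsto (fun u : ℕ => ((⌈(u : ℝ) * x⌉₊ : ℕ) : ℝ) / (u : ℝ)) atTop (𝓝 x) := by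
    have hupper : Tendsto (fun u : ℕ => x + (u : ℝ)⁻¹) atTop (𝓝 x) := by
      have h := (tendsto_const_nhds (x := x) (f := (atTop : Filter ℕ))).add
        (tendsto_inv_atTop_nhds_zero_nat (𝕜 := ℝ))
      rwa [add_zero] at h
    apply tendsto_of_tendsto_of_tendsto_of_le_of_le' tendsto_const_nhds hupper
    · filter_upwards [eventually_ge_atTop 1] with u hu
      have hu0 : (0:ℝ) < (u : ℝ) := by exact_mod_cast hu
      rw [le_div_iff₀ hu0]
      calc x * (u : ℝ) = (u : ℝ) * x := by ring
        _ ≤ _ := Nat.le_ceil _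
    · filter_upwards [eventually_ge_atTop 1] with u hu
      have hu0 : (0:ℝ) < (u : ℝ) := by exact_mod_cast hu
      rw [div_le_iff₀ hu0]
      have hcl := Nat.ceil_lt_add_one (by positivity : (0:ℝ) ≤ (u : ℝ) * x)
      have : (x + (u:ℝ)⁻¹) * (u:ℝ) = (u:ℝ) * x + (u:ℝ)⁻¹ * (u:ℝ) := by ring
      rw [this, inv_mul_cancel₀ (ne_of_gt hu0)]
      linarith
  have hC : Tendsto (fun u : ℕ => F ((⌈(u : ℝ) * x⌉₊ : ℕ) : ℝ) / F (u : ℝ))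
      atTop (𝓝 (x ^ (-1/ξ - 1))) := Fratio hFpos hFanti hRV hx
  have hprod := ((hA.mul hB).mul hC).mul hD
  have hlim : ξ * x * x ^ (-1/ξ - 1) * ξ⁻¹ = x ^ (-1/ξ) := by
    have h1 : x * x ^ (-1/ξ - 1) = x ^ (-1/ξ) := by
      have h := (Real.rpow_add hx0 1 (-1/ξ - 1)).symm
      rw [Real.rpow_one] at h
      rw [h]
      norm_num
    calc ξ * x * x ^ (-1/ξ - 1) * ξ⁻¹ = (x * x ^ (-1/ξ - 1)) * (ξ * ξ⁻¹) := by ring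
      _ = x ^ (-1/ξ) := by rw [mul_inv_cancel₀ hξne, mul_one, h1]
  rw [hlim] at hprod
  apply hprod.congr'
  filter_upwards [eventually_ge_atTop (max d 1)] with u hu
  have hud : d ≤ u := le_trans (le_max_left _ _) hu
  have hu1 : 1 ≤ u := le_trans (le_max_right _ _) hu
  have hMd : d ≤ ⌈(u : ℝ) * x⌉₊ := le_trans hud (hMle u)
  have hM1 : 1 ≤ ⌈(u : ℝ) * x⌉₊ := le_trans hu1 (hMle u)
  have hT : ∀ m : ℕ, d ≤ m → (∑' i : ℕ, p (m + i)) = c * G m := by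
    intro m hm
    rw [hGdef, ← tsum_mul_left]
    exact tsum_congr fun i => hpF (m + i) (le_trans hm (Nat.le_add_right m i))
  rw [hT u hud, hT _ hMd, mul_div_mul_left _ _ (ne_of_gt hc)]
  have hu0 : (0:ℝ) < (u : ℝ) := by exact_mod_cast hu1
  have hM0 : (0:ℝ) < ((⌈(u : ℝ) * x⌉₊ : ℕ) : ℝ) := by exact_mod_cast hM1
  have hFu : 0 < F (u : ℝ) := hFpos _ hu0.le
  have hFM : 0 < F ((⌈(u : ℝ) * x⌉₊ : ℕ) : ℝ) := hFpos _ hM0.le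
  have hGu : 0 < G u := hGpos u
  field_simp
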